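/- A strategy profile in the no-limit clairvoyance game is a Nash equilibrium if and only if player 1 bets n with probability 1 with a winning hand and with probability n/(1+n) with a losing hand, and for every x ∈ (0,n] player 2's probability of calling a bet of size x lies in the interval [1/(1+x), min{n/(x(1+n)), 1}]. -/
import Mathlib


/-!  A concrete model of the no-limit clairvoyance game with integer bet sizes.
Player 1 is dealt a winning hand (`true`) or losing hand (`false`) with probability
1/2 each, bets an integer `x ∈ {0,…,n}` (0 = check), and player 2 calls or folds.
A strategy for player 1 assigns to each hand a probability distribution over bet
sizes; a strategy for player 2 assigns to each bet size a calling probability. -/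

/-- `s` is a valid strategy for player 1 in the clairvoyance game with stack `n`. -/
def IsStrat1 (n : ℕ) (s : Bool → ℕ → ℝ) : Prop :=
  (∀ h x, 0 ≤ s h x) ∧ (∀ h : Bool, ∑ x ∈ Finset.range (n + 1), s h x = 1)

/-- `s` is a valid strategy for player 2 (a calling probability for each bet size). -/
def IsStrat2 (n : ℕ) (s : ℕ → ℝ) : Prop :=
  ∀ x, 0 ≤ s x ∧ s x ≤ 1

/-- Player 1's payoff with hand `h` after betting `x`, when player 2 calls a bet of
size `x` with probability `s2 x`: a check yields ±0.5, a called bet of `x` yields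
±(0.5 + x), and a fold yields +0.5. -/
noncomputable def pay (s2 : ℕ → ℝ) (h : Bool) (x : ℕ) : ℝ :=
  if x = 0 then (if h then 0.5 else -0.5)
  else s2 x * (if h then (0.5 + (x : ℝ)) else -(0.5 + (x : ℝ))) + (1 - s2 x) * 0.5

/-- Player 1's expected payoff (hands equiprobable); the game is zero-sum. -/
noncomputable def u1 (n : ℕ) (s1 : Bool → ℕ → ℝ) (s2 : ℕ → ℝ) : ℝ :=
  (1/2) * ∑ x ∈ Finset.range (n + 1), s1 true x * pay s2 true x
    + (1/2) * ∑ x ∈ Finset.range (n + 1), s1 false x * pay s2 false x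

/-- `(s1, s2)` is a Nash equilibrium of the (zero-sum) clairvoyance game:
no unilateral profitable deviation. -/
def IsNash (n : ℕ) (s1 : Bool → ℕ → ℝ) (s2 : ℕ → ℝ) : Prop :=
  IsStrat1 n s1 ∧ IsStrat2 n s2 ∧
  (∀ s1', IsStrat1 n s1' → u1 n s1' s2 ≤ u1 n s1 s2) ∧
  (∀ s2', IsStrat2 n s2' → u1 n s1 s2 ≤ u1 n s1 s2')


lemma pay_true (s2 : ℕ → ℝ) (x : ℕ) (hx : x ≠ 0) : pay s2 true x = 0.5 + s2 x * x := by
  simp [pay, hx]; ring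

lemma pay_false (s2 : ℕ → ℝ) (x : ℕ) (hx : x ≠ 0) :
    pay s2 false x = 0.5 - s2 x * (1 + x) := by
  simp [pay, hx]; ring

lemma pay_true0 (s2 : ℕ → ℝ) : pay s2 true 0 = 0.5 := by simp [pay]

lemma pay_false0 (s2 : ℕ → ℝ) : pay s2 false 0 = -0.5 := by simp [pay]

-- best response lemma
lemma br1 (n : ℕ) (s1 : Bool → ℕ → ℝ) (s2 : ℕ → ℝ) (hs1 : IsStrat1 n s1)
    (hmax : ∀ s1', IsStrat1 n s1' → u1 n s1' s2 ≤ u1 n s1 s2)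
    (h : Bool) (y : ℕ) (hy : y ≤ n) :
    pay s2 h y ≤ ∑ x ∈ Finset.range (n + 1), s1 h x * pay s2 h x := by
  set s1' : Bool → ℕ → ℝ := fun h' x => if h' = h then (if x = y then 1 else 0) else s1 h' x with hs1'
  have hmem : y ∈ Finset.range (n + 1) := Finset.mem_range.2 (Nat.lt_succ_of_le hy)
  have hstrat : IsStrat1 n s1' := by
    constructor
    · intro h' x
      simp only [hs1']
      split
      · split <;> norm_num
      · exact hs1.1 h' x
    · intro h'
      simp only [hs1']
      by_cases hh : h' = h
      · simp [hh, Finset.sum_ite_eq', hmem]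
      · simp [hh, hs1.2 h']
  have key := hmax s1' hstrat
  have hdelta : ∀ g : ℕ → ℝ, ∑ x ∈ Finset.range (n + 1), (if x = y then (1:ℝ) else 0) * g x = g y := by
    intro g
    rw [Finset.sum_eq_single_of_mem y hmem]
    · simp
    · intro b _ hb; simp [hb]
  cases h with
  | true =>
    have e1 : ∀ x, s1' true x = if x = y then (1:ℝ) else 0 := by intro x; simp [hs1']
    have e2 : ∀ x, s1' false x = s1 false x := by intro x; simp [hs1']
    simp only [u1, e1, e2, hdelta] at key
    linarith
  | false =>
    have e1 : ∀ x, s1' false x = if x = y then (1:ℝ) else 0 := by intro x; simp [hs1']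
    have e2 : ∀ x, s1' true x = s1 true x := by intro x; simp [hs1']
    simp only [u1, e1, e2, hdelta] at key
    linarith

lemma pay_congr {s2 s2' : ℕ → ℝ} (h : Bool) (x : ℕ) (e : s2' x = s2 x) :
    pay s2' h x = pay s2 h x := by simp [pay, e]

lemma support1 (n : ℕ) (s1 : Bool → ℕ → ℝ) (s2 : ℕ → ℝ) (hs1 : IsStrat1 n s1)
    (hmax : ∀ s1', IsStrat1 n s1' → u1 n s1' s2 ≤ u1 n s1 s2)
    (h : Bool) (x : ℕ) (hx : x ≤ n) (hne : s1 h x ≠ 0) :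
    pay s2 h x = ∑ z ∈ Finset.range (n + 1), s1 h z * pay s2 h z := by
  set V := ∑ z ∈ Finset.range (n + 1), s1 h z * pay s2 h z with hV
  have hsum : ∑ z ∈ Finset.range (n + 1), s1 h z * (V - pay s2 h z) = 0 := by
    simp only [mul_sub]
    rw [Finset.sum_sub_distrib, ← Finset.sum_mul, hs1.2 h]
    simp [hV]
  have hnn : ∀ z ∈ Finset.range (n + 1), 0 ≤ s1 h z * (V - pay s2 h z) := by
    intro z hz
    have := br1 n s1 s2 hs1 hmax h z (Nat.lt_succ_iff.1 (Finset.mem_range.1 hz))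
    have := hs1.1 h z
    nlinarith
  have := (Finset.sum_eq_zero_iff_of_nonneg hnn).1 hsum x
    (Finset.mem_range.2 (Nat.lt_succ_of_le hx))
  rcases mul_eq_zero.1 this with h' | h'
  · exact absurd h' hne
  · linarith

lemma p2opt (n : ℕ) (s1 : Bool → ℕ → ℝ) (s2 : ℕ → ℝ) (hs2 : IsStrat2 n s2)
    (hmin : ∀ s2', IsStrat2 n s2' → u1 n s1 s2 ≤ u1 n s1 s2')
    (y : ℕ) (hy1 : 1 ≤ y) (hy2 : y ≤ n) (t : ℝ) (ht0 : 0 ≤ t) (ht1 : t ≤ 1) :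
    0 ≤ (t - s2 y) * (s1 true y * y - s1 false y * (1 + y)) := by
  set s2' := Function.update s2 y t with hs2'
  have hs2'strat : IsStrat2 n s2' := by
    intro x
    by_cases hxy : x = y
    · subst hxy; simp [hs2', ht0, ht1]
    · simpa [hs2', Function.update_of_ne hxy] using hs2 x
  have key := hmin s2' hs2'strat
  have hmem : y ∈ Finset.range (n + 1) := Finset.mem_range.2 (Nat.lt_succ_of_le hy2)
  have hy0 : y ≠ 0 := Nat.one_le_iff_ne_zero.1 hy1
  have hupd : s2' y = t := Function.update_self y t s2
  have hrw : ∀ (h : Bool) (s2'' : ℕ → ℝ), ∑ x ∈ Finset.range (n + 1), s1 h x * pay s2'' h x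
      = s1 h y * pay s2'' h y + ∑ x ∈ (Finset.range (n + 1)).erase y, s1 h x * pay s2'' h x :=
    fun h s2'' => (Finset.add_sum_erase _ _ hmem).symm
  have herase : ∀ h : Bool, ∑ x ∈ (Finset.range (n + 1)).erase y, s1 h x * pay s2' h x
      = ∑ x ∈ (Finset.range (n + 1)).erase y, s1 h x * pay s2 h x := by
    intro h
    refine Finset.sum_congr rfl fun x hx => ?_
    rw [pay_congr h x (Function.update_of_ne (Finset.mem_erase.1 hx).1 t s2)]
  rw [u1, u1, hrw true s2', hrw false s2', hrw true s2, hrw false s2,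
    herase true, herase false,
    pay_true s2' y hy0, pay_false s2' y hy0, pay_true s2 y hy0, pay_false s2 y hy0,
    hupd] at key
  nlinarith [key]

set_option maxHeartbeats 1000000 in
/-- A strategy profile of the no-limit clairvoyance game is a Nash equilibrium if and
only if player 1 bets `n` with probability 1 with a winning hand and with probability
`n/(1+n)` with a losing hand (checking otherwise), and for every `x ∈ (0,n]` player 2's
probability of calling a bet of size `x` lies in `[1/(1+x), min {n/(x(1+n)), 1}]`. -/
theorem clairvoyance_nash_characterization (n : ℕ) (hn : 1 ≤ n)
    (s1 : Bool → ℕ → ℝ) (s2 : ℕ → ℝ)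
    (h1 : IsStrat1 n s1) (h2 : IsStrat2 n s2) :
    IsNash n s1 s2 ↔
      (s1 true n = 1 ∧ s1 false n = (n : ℝ) / (1 + n) ∧
        s1 false 0 = 1 - (n : ℝ) / (1 + n) ∧
        ∀ x : ℕ, 1 ≤ x → x ≤ n →
          1 / (1 + (x : ℝ)) ≤ s2 x ∧ s2 x ≤ min ((n : ℝ) / (x * (1 + n))) 1) := by
  have hn0 : n ≠ 0 := Nat.one_le_iff_ne_zero.1 hn
  have hnR : (1:ℝ) ≤ n := by exact_mod_cast hn
  have hnpos : (0:ℝ) < 1 + n := by linarith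
  have hmem : n ∈ Finset.range (n + 1) := Finset.mem_range.2 (Nat.lt_succ_self n)
  have hsub : ({0, n} : Finset ℕ) ⊆ Finset.range (n + 1) := by
    intro x hx
    rcases Finset.mem_insert.1 hx with h | h
    · subst h; exact Finset.mem_range.2 (Nat.succ_pos n)
    · rw [Finset.mem_singleton.1 h]; exact hmem
  have h0n : (0 : ℕ) ≠ n := fun h => hn0 h.symm
  constructor
  · intro hN
    obtain ⟨_, _, hmax, hmin⟩ := hN
    set Vt := ∑ x ∈ Finset.range (n + 1), s1 true x * pay s2 true x with hVtdef
    set Vf := ∑ x ∈ Finset.range (n + 1), s1 false x * pay s2 false x with hVfdef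
    have brt : ∀ y, y ≤ n → pay s2 true y ≤ Vt := fun y hy => br1 n s1 s2 h1 hmax true y hy
    have brf : ∀ y, y ≤ n → pay s2 false y ≤ Vf := fun y hy => br1 n s1 s2 h1 hmax false y hy
    have hVfge : -0.5 ≤ Vf := by have := brf 0 (Nat.zero_le n); rwa [pay_false0] at this
    -- Step 1: Vf = -1/2
    have hVf : Vf = -0.5 := by
      by_contra hne
      have hlt : -0.5 < Vf := lt_of_le_of_ne hVfge (Ne.symm hne)
      have hpt : ∀ x ∈ Finset.range (n + 1),
          ((n:ℝ) + 1) * s1 false x ≤ n * s1 true x := by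
        intro x hx
        have hxn : x ≤ n := Nat.lt_succ_iff.1 (Finset.mem_range.1 hx)
        have ha0 : 0 ≤ s1 true x := h1.1 true x
        have hb0 : 0 ≤ s1 false x := h1.1 false x
        by_cases hb : s1 false x = 0
        · rw [hb, mul_zero]; positivity
        · have hpf := support1 n s1 s2 h1 hmax false x hxn hb
          rw [← hVfdef] at hpf
          have hx0 : x ≠ 0 := by
            intro h0
            subst h0
            rw [pay_false0] at hpf
            linarith
          have hx1 : 1 ≤ x := Nat.one_le_iff_ne_zero.2 hx0
          have hxR : (1:ℝ) ≤ x := by exact_mod_cast hx1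
          have hxnR : (x:ℝ) ≤ n := by exact_mod_cast hxn
          rw [pay_false s2 x hx0] at hpf
          have hs2x : s2 x * (1 + (x:ℝ)) < 1 := by linarith
          have hs2lt1 : s2 x < 1 := by nlinarith [(h2 x).1]
          have hp2 := p2opt n s1 s2 h2 hmin x hx1 hxn 1 zero_le_one le_rfl
          have hc : 0 ≤ s1 true x * x - s1 false x * (1 + x) := by nlinarith
          have hx00 : 0 ≤ (x:ℝ) * ((n:ℝ) * s1 true x - ((n:ℝ)+1) * s1 false x) := by
            have hid : (x:ℝ) * ((n:ℝ) * s1 true x - ((n:ℝ)+1) * s1 false x)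
                = (n:ℝ) * (s1 true x * x - s1 false x * (1 + x))
                  + s1 false x * ((n:ℝ) - x) := by ring
            rw [hid]
            have h1' : (0:ℝ) ≤ (n:ℝ) * (s1 true x * x - s1 false x * (1 + x)) :=
              mul_nonneg (by positivity) hc
            have h2' : (0:ℝ) ≤ s1 false x * ((n:ℝ) - x) :=
              mul_nonneg hb0 (by linarith)
            linarith
          nlinarith [hx00]
      have hsum := Finset.sum_le_sum hpt
      rw [← Finset.mul_sum, ← Finset.mul_sum, h1.2 true, h1.2 false] at hsum
      linarith
    -- lower bound on s2
    have hlow : ∀ x : ℕ, 1 ≤ x → x ≤ n → 1 / (1 + (x:ℝ)) ≤ s2 x := by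
      intro x hx1 hxn
      have hx0 : x ≠ 0 := Nat.one_le_iff_ne_zero.1 hx1
      have hxpos : (0:ℝ) < 1 + x := by positivity
      have := brf x hxn
      rw [pay_false s2 x hx0, hVf] at this
      rw [div_le_iff₀ hxpos]
      nlinarith
    -- Vt lower bound
    have hVtge : 0.5 + (n:ℝ)/(1+n) ≤ Vt := by
      have hb := brt n le_rfl
      rw [pay_true s2 n hn0] at hb
      have h2n := hlow n hn le_rfl
      rw [div_le_iff₀ hnpos] at h2n
      have : (n:ℝ)/(1+n) ≤ s2 n * n := by
        rw [div_le_iff₀ hnpos]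
        nlinarith [mul_le_mul_of_nonneg_right h2n (by positivity : (0:ℝ) ≤ (n:ℝ))]
      linarith
    have hnRpos : (0:ℝ) < n := by linarith
    -- key claim
    have keyclaim : ∀ x : ℕ, 1 ≤ x → x ≤ n → s1 true x ≠ 0 →
        x = n ∧ s2 x = 1 / (1 + (x:ℝ)) := by
      intro x hx1 hxn hax
      have hx0 : x ≠ 0 := Nat.one_le_iff_ne_zero.1 hx1
      have hxR : (1:ℝ) ≤ x := by exact_mod_cast hx1
      have hxpos : (0:ℝ) < 1 + x := by positivity
      have hpt := support1 n s1 s2 h1 hmax true x hxn hax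
      rw [← hVtdef, pay_true s2 x hx0] at hpt
      have hgt : (n:ℝ)/(1+n) ≤ s2 x * x := by linarith
      have hdpos : (0:ℝ) < (n:ℝ)/(1+n) := by positivity
      have hs2pos : 0 < s2 x := by
        rcases lt_or_ge 0 (s2 x) with h | h
        · exact h
        · exfalso
          have : s2 x * x ≤ 0 := mul_nonpos_of_nonpos_of_nonneg h (by positivity)
          linarith
      have hp2 := p2opt n s1 s2 h2 hmin x hx1 hxn 0 le_rfl zero_le_one
      have hcle : s1 true x * x - s1 false x * (1 + x) ≤ 0 := by nlinarith
      have haxpos : 0 < s1 true x := lt_of_le_of_ne (h1.1 true x) (Ne.symm hax)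
      have hbpos : 0 < s1 false x := by
        rcases lt_or_ge 0 (s1 false x) with h | h
        · exact h
        · exfalso
          have h1' : s1 false x * (1 + (x:ℝ)) ≤ 0 := mul_nonpos_of_nonpos_of_nonneg h hxpos.le
          have h2' : s1 true x * 1 ≤ s1 true x * x := mul_le_mul_of_nonneg_left hxR haxpos.le
          nlinarith
      have hpf := support1 n s1 s2 h1 hmax false x hxn (ne_of_gt hbpos)
      rw [← hVfdef, hVf, pay_false s2 x hx0] at hpf
      have hs2x : s2 x = 1 / (1 + (x:ℝ)) := by
        rw [eq_div_iff (ne_of_gt hxpos)]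
        linarith
      have hgt' : (n:ℝ)/(1+n) ≤ (x:ℝ)/(1+x) := by
        have : s2 x * x = (x:ℝ)/(1+x) := by rw [hs2x]; ring
        linarith
      rw [div_le_div_iff₀ hnpos hxpos] at hgt'
      have hxge : (n:ℝ) ≤ x := by nlinarith [hgt']
      have : n ≤ x := by exact_mod_cast hxge
      exact ⟨le_antisymm hxn this, hs2x⟩
    -- s1 true vanishes off n
    have azero : ∀ x ∈ Finset.range (n + 1), x ≠ n → s1 true x = 0 := by
      intro x hx hxn
      have hxle : x ≤ n := Nat.lt_succ_iff.1 (Finset.mem_range.1 hx)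
      by_cases hx0 : x = 0
      · subst hx0
        by_contra hax
        have := support1 n s1 s2 h1 hmax true 0 (Nat.zero_le n) hax
        rw [← hVtdef, pay_true0] at this
        have : 0 < (n:ℝ)/(1+n) := by positivity
        linarith [hVtge]
      · by_contra hax
        exact hxn (keyclaim x (Nat.one_le_iff_ne_zero.2 hx0) hxle hax).1
    have hatn : s1 true n = 1 := by
      have := h1.2 true
      rwa [Finset.sum_eq_single_of_mem n hmem azero] at this
    have p2n : s2 n = 1 / (1 + (n:ℝ)) :=
      (keyclaim n hn le_rfl (by rw [hatn]; exact one_ne_zero)).2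
    have hVtval : Vt = 0.5 + (n:ℝ)/(1+n) := by
      have := support1 n s1 s2 h1 hmax true n le_rfl (by rw [hatn]; exact one_ne_zero)
      rw [← hVtdef, pay_true s2 n hn0, p2n] at this
      rw [← this]
      field_simp
    -- upper bound on s2
    have hup : ∀ x : ℕ, 1 ≤ x → x ≤ n → s2 x ≤ min ((n:ℝ) / (x * (1 + n))) 1 := by
      intro x hx1 hxn
      refine le_min ?_ (h2 x).2
      have hx0 : x ≠ 0 := Nat.one_le_iff_ne_zero.1 hx1
      have hxR : (1:ℝ) ≤ x := by exact_mod_cast hx1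
      have := brt x hxn
      rw [pay_true s2 x hx0, hVtval] at this
      have h' : s2 x * (x:ℝ) ≤ (n:ℝ)/(1+n) := by linarith
      rw [le_div_iff₀ hnpos] at h'
      rw [le_div_iff₀ (by positivity)]
      nlinarith [h']
    -- s1 false vanishes on (0,n)
    have bzero : ∀ x : ℕ, 1 ≤ x → x < n → s1 false x = 0 := by
      intro x hx1 hlt
      by_contra hb
      have hxn : x ≤ n := le_of_lt hlt
      have hx0 : x ≠ 0 := Nat.one_le_iff_ne_zero.1 hx1
      have hxR : (1:ℝ) ≤ x := by exact_mod_cast hx1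
      have hax : s1 true x = 0 := azero x (Finset.mem_range.2 (Nat.lt_succ_of_le hxn)) (Nat.ne_of_lt hlt)
      have hbpos : 0 < s1 false x := lt_of_le_of_ne (h1.1 false x) (Ne.symm hb)
      have hp2 := p2opt n s1 s2 h2 hmin x hx1 hxn 1 zero_le_one le_rfl
      rw [hax] at hp2
      have hs2x : s2 x = 1 := by
        refine le_antisymm (h2 x).2 ?_
        by_contra hlt1
        push_neg at hlt1
        nlinarith [mul_pos hbpos (show (0:ℝ) < 1 + (x:ℝ) by positivity)]
      have hpf := support1 n s1 s2 h1 hmax false x hxn hb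
      rw [← hVfdef, hVf, pay_false s2 x hx0, hs2x] at hpf
      linarith
    -- s1 false n
    have hinv_pos : (0:ℝ) < 1 / (1 + (n:ℝ)) := by positivity
    have hinv_lt : 1 / (1 + (n:ℝ)) < 1 := by rw [div_lt_one hnpos]; linarith
    have hp20 := p2opt n s1 s2 h2 hmin n hn le_rfl 0 le_rfl zero_le_one
    have hp21 := p2opt n s1 s2 h2 hmin n hn le_rfl 1 zero_le_one le_rfl
    rw [p2n, hatn] at hp20 hp21
    have hbn : s1 false n = (n:ℝ) / (1 + n) := by
      rw [eq_div_iff hnpos.ne']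
      nlinarith
    have hb0 : s1 false 0 = 1 - (n:ℝ) / (1 + n) := by
      have hpair : ∑ x ∈ Finset.range (n + 1), s1 false x
          = ∑ x ∈ ({0, n} : Finset ℕ), s1 false x := by
        refine (Finset.sum_subset hsub fun x hx hx' => ?_).symm
        refine bzero x ?_ ?_
        · exact Nat.one_le_iff_ne_zero.2 fun h => hx' (by simp [h])
        · have : x ≤ n := Nat.lt_succ_iff.1 (Finset.mem_range.1 hx)
          exact lt_of_le_of_ne this fun h => hx' (by simp [h])
      rw [h1.2 false, Finset.sum_pair h0n] at hpair
      rw [← hbn]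
      linarith
    exact ⟨hatn, hbn, hb0, fun x hx1 hxn => ⟨hlow x hx1 hxn, hup x hx1 hxn⟩⟩

  · rintro ⟨ht, hfn, hf0, hbnd⟩
    -- s2 n = 1/(1+n)
    have hminn : ((n:ℝ) / (n * (1 + n))) = 1 / (1 + n) := by
      rw [div_eq_div_iff (by positivity) hnpos.ne']; ring
    have p2n : s2 n = 1 / (1 + n) := by
      have hb := hbnd n hn le_rfl
      have h2' := le_trans hb.2 (min_le_left _ _)
      rw [hminn] at h2'
      linarith [hb.1]
    -- s1 true vanishes off n
    have azero : ∀ x ∈ Finset.range (n + 1), x ≠ n → s1 true x = 0 := by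
      have hz : ∑ x ∈ (Finset.range (n + 1)).erase n, s1 true x = 0 := by
        have := Finset.add_sum_erase (Finset.range (n + 1)) (s1 true) hmem
        rw [h1.2 true, ht] at this
        linarith
      intro x hx hxn
      exact (Finset.sum_eq_zero_iff_of_nonneg
        (fun z _ => h1.1 true z)).1 hz x (Finset.mem_erase.2 ⟨hxn, hx⟩)
    -- s1 false vanishes off {0, n}
    have bzero : ∀ x ∈ Finset.range (n + 1), x ≠ 0 → x ≠ n → s1 false x = 0 := by
      have hpair : ∑ x ∈ ({0, n} : Finset ℕ), s1 false x = 1 := by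
        rw [Finset.sum_pair h0n, hf0, hfn]; ring
      have hz : ∑ x ∈ Finset.range (n + 1) \ {0, n}, s1 false x = 0 := by
        have := Finset.sum_sdiff (f := s1 false) hsub
        rw [hpair, h1.2 false] at this
        linarith
      intro x hx hx0 hxn
      refine (Finset.sum_eq_zero_iff_of_nonneg (fun z _ => h1.1 false z)).1 hz x ?_
      rw [Finset.mem_sdiff]
      exact ⟨hx, by simp [hx0, hxn]⟩
    -- value of u1 for arbitrary s2''
    have hval : ∀ s2'' : ℕ → ℝ, u1 n s1 s2'' = (n:ℝ) / (2 * (1 + n)) := by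
      intro s2''
      have e1 : ∑ x ∈ Finset.range (n + 1), s1 true x * pay s2'' true x
          = pay s2'' true n := by
        rw [Finset.sum_eq_single_of_mem n hmem
          (fun b hb hbn => by rw [azero b hb hbn, zero_mul]), ht, one_mul]
      have e2 : ∑ x ∈ Finset.range (n + 1), s1 false x * pay s2'' false x
          = s1 false 0 * pay s2'' false 0 + s1 false n * pay s2'' false n := by
        rw [← Finset.sum_subset hsub (fun x hx hx' => by
          rw [bzero x hx (fun h => hx' (by simp [h])) (fun h => hx' (by simp [h])),
            zero_mul])]
        rw [Finset.sum_pair h0n]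
      rw [u1, e1, e2, pay_true s2'' n hn0, pay_false s2'' n hn0, pay_false0, hfn, hf0]
      field_simp
      ring
    refine ⟨h1, h2, ?_, ?_⟩
    · -- P1 cannot improve
      intro s1' hs1'
      rw [hval s2]
      have paybt : ∀ x ∈ Finset.range (n + 1), pay s2 true x ≤ 0.5 + (n:ℝ)/(1+n) := by
        intro x hx
        by_cases hx0 : x = 0
        · subst hx0; rw [pay_true0]
          have : 0 ≤ (n:ℝ)/(1+n) := by positivity
          linarith
        · rw [pay_true s2 x hx0]
          have hx1 : 1 ≤ x := Nat.one_le_iff_ne_zero.2 hx0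
          have hxn : x ≤ n := Nat.lt_succ_iff.1 (Finset.mem_range.1 hx)
          have hxR : (1:ℝ) ≤ x := by exact_mod_cast hx1
          have hb := (hbnd x hx1 hxn).2
          have hb' := le_trans hb (min_le_left _ _)
          rw [le_div_iff₀ (by positivity)] at hb'
          have hkey : s2 x * (x:ℝ) ≤ (n:ℝ)/(1+n) := by
            rw [le_div_iff₀ hnpos]
            nlinarith
          linarith
      have paybf : ∀ x ∈ Finset.range (n + 1), pay s2 false x ≤ -0.5 := by
        intro x hx
        by_cases hx0 : x = 0
        · subst hx0; rw [pay_false0]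
        · rw [pay_false s2 x hx0]
          have hx1 : 1 ≤ x := Nat.one_le_iff_ne_zero.2 hx0
          have hxn : x ≤ n := Nat.lt_succ_iff.1 (Finset.mem_range.1 hx)
          have hxR : (0:ℝ) < 1 + x := by positivity
          have hb := (hbnd x hx1 hxn).1
          rw [div_le_iff₀ hxR] at hb
          nlinarith
      have bt : ∑ x ∈ Finset.range (n + 1), s1' true x * pay s2 true x
          ≤ 0.5 + (n:ℝ)/(1+n) := by
        calc ∑ x ∈ Finset.range (n + 1), s1' true x * pay s2 true x
            ≤ ∑ x ∈ Finset.range (n + 1), s1' true x * (0.5 + (n:ℝ)/(1+n)) :=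
              Finset.sum_le_sum (fun x hx =>
                mul_le_mul_of_nonneg_left (paybt x hx) (hs1'.1 true x))
          _ = 0.5 + (n:ℝ)/(1+n) := by rw [← Finset.sum_mul, hs1'.2 true, one_mul]
      have bf : ∑ x ∈ Finset.range (n + 1), s1' false x * pay s2 false x ≤ -0.5 := by
        calc ∑ x ∈ Finset.range (n + 1), s1' false x * pay s2 false x
            ≤ ∑ x ∈ Finset.range (n + 1), s1' false x * (-0.5) :=
              Finset.sum_le_sum (fun x hx =>
                mul_le_mul_of_nonneg_left (paybf x hx) (hs1'.1 false x))
          _ = -0.5 := by rw [← Finset.sum_mul, hs1'.2 false, one_mul]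
      rw [u1]
      have : (0.5 : ℝ) + (n:ℝ)/(1+n) + (-0.5) = 2 * ((n:ℝ) / (2 * (1 + n))) := by
        field_simp; ring
      nlinarith
    · intro s2' hs2'
      rw [hval s2, hval s2']
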